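/- arXiv:2010.00107 — 2 statements merged into one kernel-verified Lean document; each statement's English description precedes it below -/
import Mathlib

section
/- Let SG be the unique nonempty compact subset of ℝ² satisfying SG = F₀(SG) ∪ F₁(SG) ∪ F₂(SG), and let V* be the union, over all m ≥ 0 and all words w ∈ {0,1,2}^m, of the sets F_w({q0, q1, q2}). Let f : SG → ℝ be continuous and suppose its zero set Z = {x ∈ SG : f(x) = 0} is finite; set Z₀ = Z ∩ V*. Then for every connected component D of SG \ Z₀ (in the subspace topology of SG), either f(x) ≥ 0 for all x ∈ D, or f(x) ≤ 0 for all x ∈ D. -/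
noncomputable def q : Fin 3 → ℝ × ℝ
  | 0 => (1 / 2, Real.sqrt 3 / 2)
  | 1 => (0, 0)
  | 2 => (1, 0)

noncomputable def F (i : Fin 3) (x : ℝ × ℝ) : ℝ × ℝ := (1 / 2 : ℝ) • (x + q i)

noncomputable def Fw : List (Fin 3) → ℝ × ℝ → ℝ × ℝ
  | [] => id
  | i :: w => F i ∘ Fw w

noncomputable def Vstar : Set (ℝ × ℝ) :=
  ⋃ w : List (Fin 3), Fw w '' {q 0, q 1, q 2}

open Set Metric

lemma sqrt3_pos : (0:ℝ) < Real.sqrt 3 := Real.sqrt_pos.mpr (by norm_num)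

lemma F_fst (i : Fin 3) (x : ℝ × ℝ) : (F i x).1 = (x.1 + (q i).1) / 2 := by
  simp [F]; ring

lemma F_snd (i : Fin 3) (x : ℝ × ℝ) : (F i x).2 = (x.2 + (q i).2) / 2 := by
  simp [F]; ring

lemma F_injective (i : Fin 3) : Function.Injective (F i) := by
  intro a b h
  have h2 : a + q i = b + q i := smul_right_injective (ℝ × ℝ) (by norm_num : (1/2:ℝ) ≠ 0) h
  exact add_right_cancel h2

lemma F_continuous (i : Fin 3) : Continuous (F i) := by
  unfold F; fun_prop

lemma dist_F (i : Fin 3) (x y : ℝ × ℝ) : dist (F i x) (F i y) = dist x y / 2 := by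
  have : F i x - F i y = (1/2:ℝ) • (x - y) := by
    simp only [F, smul_add, smul_sub]; abel
  rw [dist_eq_norm, this, norm_smul, ← dist_eq_norm]
  simp [Real.norm_eq_abs]
  ring

lemma F_q_self (i : Fin 3) : F i (q i) = q i := by
  unfold F
  rw [← two_smul ℝ, smul_smul]
  norm_num

lemma F_q_comm (i j : Fin 3) : F i (q j) = F j (q i) := by
  simp [F, add_comm]

lemma Fw_append (u v : List (Fin 3)) (x : ℝ × ℝ) : Fw (u ++ v) x = Fw u (Fw v x) := by
  induction u with
  | nil => rfl
  | cons i u ih => simp [Fw, ih]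

lemma Fw_injective (w : List (Fin 3)) : Function.Injective (Fw w) := by
  induction w with
  | nil => exact fun a b h => h
  | cons i w ih => exact fun a b h => ih (F_injective i h)

lemma Fw_continuous (w : List (Fin 3)) : Continuous (Fw w) := by
  induction w with
  | nil => exact continuous_id
  | cons i w ih => exact (F_continuous i).comp ih

lemma dist_Fw (w : List (Fin 3)) (x y : ℝ × ℝ) :
    dist (Fw w x) (Fw w y) = dist x y / 2 ^ w.length := by
  induction w with
  | nil => simp [Fw]
  | cons i w ih =>
    show dist (F i (Fw w x)) (F i (Fw w y)) = _
    rw [dist_F, ih, List.length_cons, pow_succ]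
    ring

lemma Fw_replicate (n : ℕ) (i : Fin 3) : Fw (List.replicate n i) (q i) = q i := by
  induction n with
  | zero => rfl
  | succ n ih =>
    show F i (Fw (List.replicate n i) (q i)) = q i
    rw [ih, F_q_self]

lemma q_mem_Vstar (k : Fin 3) : q k ∈ Vstar := by
  refine mem_iUnion.mpr ⟨[], ⟨q k, ?_, rfl⟩⟩
  fin_cases k <;> simp

lemma F_mem_Vstar (i : Fin 3) {z : ℝ × ℝ} (hz : z ∈ Vstar) : F i z ∈ Vstar := by
  rcases mem_iUnion.mp hz with ⟨w, y, hy, rfl⟩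
  exact mem_iUnion.mpr ⟨i :: w, y, hy, rfl⟩

lemma Fw_mem_Vstar (w : List (Fin 3)) {z : ℝ × ℝ} (hz : z ∈ Vstar) : Fw w z ∈ Vstar := by
  induction w with
  | nil => exact hz
  | cons i w ih => exact F_mem_Vstar i ih

section SGfacts

variable {SG : Set (ℝ × ℝ)} (hne : SG.Nonempty) (hcpt : IsCompact SG)
  (hself : SG = F 0 '' SG ∪ F 1 '' SG ∪ F 2 '' SG)

include hself in
lemma F_mem_SG (i : Fin 3) {x : ℝ × ℝ} (hx : x ∈ SG) : F i x ∈ SG := by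
  rw [hself]
  fin_cases i
  · exact Or.inl (Or.inl ⟨x, hx, rfl⟩)
  · exact Or.inl (Or.inr ⟨x, hx, rfl⟩)
  · exact Or.inr ⟨x, hx, rfl⟩

include hself in
lemma exists_F_eq {x : ℝ × ℝ} (hx : x ∈ SG) : ∃ i y, y ∈ SG ∧ x = F i y := by
  rw [hself] at hx
  rcases hx with (⟨y, hy, rfl⟩ | ⟨y, hy, rfl⟩) | ⟨y, hy, rfl⟩
  exacts [⟨0, y, hy, rfl⟩, ⟨1, y, hy, rfl⟩, ⟨2, y, hy, rfl⟩]

include hne hcpt hself in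
lemma q_mem_SG (i : Fin 3) : q i ∈ SG := by
  obtain ⟨x0, hx0⟩ := hne
  have hmem : ∀ n, (F i)^[n] x0 ∈ SG := by
    intro n
    induction n with
    | zero => exact hx0
    | succ n ih => rw [Function.iterate_succ_apply']; exact F_mem_SG hself i ih
  have hdist : ∀ n, dist ((F i)^[n] x0) (q i) = dist x0 (q i) / 2 ^ n := by
    intro n
    induction n with
    | zero => simp
    | succ n ih =>
      rw [Function.iterate_succ_apply', show q i = F i (q i) from (F_q_self i).symm,
        dist_F, F_q_self, ih, pow_succ]
      ring
  have htend : Filter.Tendsto (fun n => (F i)^[n] x0) Filter.atTop (nhds (q i)) := by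
    rw [tendsto_iff_dist_tendsto_zero]
    simp only [hdist]
    have : Filter.Tendsto (fun n : ℕ => dist x0 (q i) * (1/2:ℝ) ^ n) Filter.atTop (nhds 0) := by
      rw [show (0:ℝ) = dist x0 (q i) * 0 by ring]
      exact (tendsto_pow_atTop_nhds_zero_of_lt_one (by norm_num) (by norm_num)).const_mul _
    convert this using 2 with n
    rw [one_div, inv_pow, div_eq_mul_inv]
  exact hcpt.isClosed.mem_of_tendsto htend (Filter.Eventually.of_forall hmem)

include hself in
lemma cell_sub_SG (w : List (Fin 3)) : Fw w '' SG ⊆ SG := by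
  induction w with
  | nil => simp [Fw]
  | cons i w ih =>
    intro x hx
    rcases hx with ⟨y, hy, rfl⟩
    exact F_mem_SG hself i (ih ⟨y, hy, rfl⟩)

include hself in
lemma exists_cell {x : ℝ × ℝ} (hx : x ∈ SG) (n : ℕ) :
    ∃ w : List (Fin 3), w.length = n ∧ x ∈ Fw w '' SG := by
  induction n generalizing x with
  | zero => exact ⟨[], rfl, x, hx, rfl⟩
  | succ n ih =>
    obtain ⟨i, y, hy, rfl⟩ := exists_F_eq hself hx
    obtain ⟨w, hl, z, hz, rfl⟩ := ih hy
    exact ⟨i :: w, by simp [hl], z, hz, rfl⟩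

include hcpt in
lemma dist_le_in_cell {w : List (Fin 3)} {x y : ℝ × ℝ}
    (hx : x ∈ Fw w '' SG) (hy : y ∈ Fw w '' SG) :
    dist x y ≤ Metric.diam SG / 2 ^ w.length := by
  rcases hx with ⟨a, ha, rfl⟩
  rcases hy with ⟨b, hb, rfl⟩
  rw [dist_Fw]
  have := Metric.dist_le_diam_of_mem hcpt.isBounded ha hb
  gcongr

lemma exists_small_cell {ρ : ℝ} (hρ : 0 < ρ) : ∃ n : ℕ, Metric.diam SG / 2 ^ n < ρ := by
  have hd : (0:ℝ) ≤ Metric.diam SG := Metric.diam_nonneg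
  have hpos : (0:ℝ) < Metric.diam SG + 1 := by linarith
  obtain ⟨n, hn⟩ := exists_pow_lt_of_lt_one (div_pos hρ hpos) (by norm_num : (1/2:ℝ) < 1)
  refine ⟨n, ?_⟩
  have h2 : (0:ℝ) < 2 ^ n := by positivity
  have : Metric.diam SG / 2 ^ n = Metric.diam SG * (1/2)^n := by
    rw [div_pow, one_pow, div_eq_mul_inv, one_div]
  rw [this]
  calc Metric.diam SG * (1/2)^n ≤ (Metric.diam SG + 1) * (1/2)^n := by
        have : (0:ℝ) ≤ (1/2:ℝ)^n := by positivity
        nlinarith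
    _ < (Metric.diam SG + 1) * (ρ / (Metric.diam SG + 1)) := by
        have : (0:ℝ) < Metric.diam SG + 1 := by linarith
        exact mul_lt_mul_of_pos_left hn this
    _ = ρ := by field_simp

include hne hcpt hself in
lemma SG_phi_nonneg (φ : ℝ × ℝ → ℝ) (hc : Continuous φ)
    (hmid : ∀ p i, φ (F i p) = (φ p + φ (q i)) / 2) (hq : ∀ i, 0 ≤ φ (q i)) :
    ∀ p ∈ SG, 0 ≤ φ p := by
  obtain ⟨p0, hp0, hmin⟩ := hcpt.exists_isMinOn hne hc.continuousOn
  have h0 : 0 ≤ φ p0 := by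
    obtain ⟨i, y, hy, he⟩ := exists_F_eq hself hp0
    have h1 : φ p0 ≤ φ y := hmin hy
    have h2 := hmid y i
    have h3 := hq i
    rw [he] at h1 ⊢
    rw [h2] at h1 ⊢
    linarith
  exact fun p hp => le_trans h0 (hmin hp)

include hne hcpt hself in
lemma SG_ineq1 : ∀ p ∈ SG, 0 ≤ p.2 := by
  apply SG_phi_nonneg hne hcpt hself (fun p => p.2) continuous_snd
  · intro p i; rw [F_snd]
  · intro i; fin_cases i <;> simp [q] <;> positivity

include hne hcpt hself in
lemma SG_ineq2 : ∀ p ∈ SG, 0 ≤ Real.sqrt 3 * p.1 - p.2 := by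
  apply SG_phi_nonneg hne hcpt hself (fun p => Real.sqrt 3 * p.1 - p.2) (by fun_prop)
  · intro p i; rw [F_snd, F_fst]; ring
  · intro i
    fin_cases i <;> simp [q]
    · linarith [Real.sqrt_nonneg 3]

include hne hcpt hself in
lemma SG_ineq3 : ∀ p ∈ SG, 0 ≤ Real.sqrt 3 - Real.sqrt 3 * p.1 - p.2 := by
  apply SG_phi_nonneg hne hcpt hself (fun p => Real.sqrt 3 - Real.sqrt 3 * p.1 - p.2) (by fun_prop)
  · intro p i; rw [F_snd, F_fst]; ring
  · intro i
    fin_cases i <;> simp [q]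
    · linarith [Real.sqrt_nonneg 3]

end SGfacts

lemma pin1 {s a b : ℝ} (hs : 0 < s) (h1 : 0 ≤ b) (h2 : 0 ≤ s*a - b) (h3 : 0 ≤ -(s*a) - b) :
    a = 0 ∧ b = 0 := by
  have hb : b = 0 := le_antisymm (by linarith) h1
  have ha : s * a = 0 := le_antisymm (by linarith) (by linarith)
  rcases mul_eq_zero.mp ha with h | h
  · exact absurd h (ne_of_gt hs)
  · exact ⟨h, hb⟩

lemma pin2 {s a b : ℝ} (hs : 0 < s) (h1 : 0 ≤ b) (h2 : s + b ≤ s*a) (h3 : 0 ≤ s - s*a - b) :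
    a = 1 ∧ b = 0 := by
  have hb : b = 0 := le_antisymm (by linarith) h1
  have ha : s * a = s * 1 := by rw [mul_one]; exact le_antisymm (by linarith) (by linarith)
  exact ⟨mul_left_cancel₀ (ne_of_gt hs) ha, hb⟩

lemma pin3 {s a b : ℝ} (hs : 0 < s) (h1 : 0 ≤ s*a - b) (h2 : s/2 ≤ b) (h3 : 0 ≤ s - s*a - b) :
    a = 1/2 ∧ b = s/2 := by
  have ha : s * a = s * (1/2) := by
    have : s * (1/2) = s/2 := by ring
    rw [this]; exact le_antisymm (by linarith) (by linarith)
  have hb : b = s/2 := le_antisymm (by linarith) h2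
  exact ⟨mul_left_cancel₀ (ne_of_gt hs) ha, hb⟩

section SGfacts2

variable {SG : Set (ℝ × ℝ)} (hne : SG.Nonempty) (hcpt : IsCompact SG)
  (hself : SG = F 0 '' SG ∪ F 1 '' SG ∪ F 2 '' SG)

include hne hcpt hself in
lemma cell_pair {i j : Fin 3} (hij : i ≠ j) {p : ℝ × ℝ}
    (hi : p ∈ F i '' SG) (hj : p ∈ F j '' SG) : p = F i (q j) := by
  obtain ⟨u, hu, rfl⟩ := hi
  obtain ⟨v, hv, he⟩ := hj
  have e1 : v.1 + (q j).1 = u.1 + (q i).1 := by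
    have h := congrArg Prod.fst he
    rw [F_fst, F_fst] at h
    linarith
  have e2 : v.2 + (q j).2 = u.2 + (q i).2 := by
    have h := congrArg Prod.snd he
    rw [F_snd, F_snd] at h
    linarith
  have i1u := SG_ineq1 hne hcpt hself u hu
  have i2u := SG_ineq2 hne hcpt hself u hu
  have i3u := SG_ineq3 hne hcpt hself u hu
  have i1v := SG_ineq1 hne hcpt hself v hv
  have i2v := SG_ineq2 hne hcpt hself v hv
  have i3v := SG_ineq3 hne hcpt hself v hv
  have hs := sqrt3_pos
  clear he hu hv
  suffices hu' : u = q j by rw [hu']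
  fin_cases i <;> fin_cases j <;> simp only [q] at e1 e2 ⊢ <;>
    [skip; skip; skip; skip; skip; skip; skip; skip; skip]
  · exact absurd rfl hij
  · -- i = 0, j = 1
    have hm : Real.sqrt 3 * v.1 = Real.sqrt 3 * u.1 + Real.sqrt 3 * (1/2) := by
      rw [show v.1 = u.1 + 1/2 by linarith]; ring
    obtain ⟨h1, h2⟩ := pin1 hs i1u i2u (by linarith [hm, i3v])
    exact Prod.ext_iff.mpr ⟨h1, h2⟩
  · -- i = 0, j = 2
    have hm : Real.sqrt 3 * v.1 = Real.sqrt 3 * u.1 - Real.sqrt 3 * (1/2) := by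
      rw [show v.1 = u.1 - 1/2 by linarith]; ring
    obtain ⟨h1, h2⟩ := pin2 hs i1u (by linarith [hm, i2v]) i3u
    exact Prod.ext_iff.mpr ⟨h1, h2⟩
  · -- i = 1, j = 0
    obtain ⟨h1, h2⟩ := pin3 hs i2u (by linarith [i1v]) i3u
    exact Prod.ext_iff.mpr ⟨h1, h2⟩
  · exact absurd rfl hij
  · -- i = 1, j = 2
    have hm : Real.sqrt 3 * v.1 = Real.sqrt 3 * u.1 - Real.sqrt 3 * 1 := by
      rw [show v.1 = u.1 - 1 by linarith]; ring
    obtain ⟨h1, h2⟩ := pin2 hs i1u (by linarith [hm, i2v]) i3u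
    exact Prod.ext_iff.mpr ⟨h1, h2⟩
  · -- i = 2, j = 0
    obtain ⟨h1, h2⟩ := pin3 hs i2u (by linarith [i1v]) i3u
    exact Prod.ext_iff.mpr ⟨h1, h2⟩
  · -- i = 2, j = 1
    have hm : Real.sqrt 3 * v.1 = Real.sqrt 3 * u.1 + Real.sqrt 3 * 1 := by
      rw [show v.1 = u.1 + 1 by linarith]; ring
    obtain ⟨h1, h2⟩ := pin1 hs i1u i2u (by linarith [hm, i3v])
    exact Prod.ext_iff.mpr ⟨h1, h2⟩
  · exact absurd rfl hij

include hne hcpt hself in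
lemma q_not_in_cell {k i : Fin 3} (hk : k ≠ i) : q k ∉ F i '' SG := by
  rintro ⟨u, hu, he⟩
  have e1 : u.1 = 2 * (q k).1 - (q i).1 := by
    have h := congrArg Prod.fst he
    rw [F_fst] at h
    linarith
  have e2 : u.2 = 2 * (q k).2 - (q i).2 := by
    have h := congrArg Prod.snd he
    rw [F_snd] at h
    linarith
  have i1u := SG_ineq1 hne hcpt hself u hu
  have i2u := SG_ineq2 hne hcpt hself u hu
  have i3u := SG_ineq3 hne hcpt hself u hu
  have hs := sqrt3_pos
  have hm : Real.sqrt 3 * u.1 = Real.sqrt 3 * (2 * (q k).1 - (q i).1) := by rw [e1]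
  fin_cases k <;> fin_cases i <;> simp only [q] at e1 e2 hm <;>
    [skip; skip; skip; skip; skip; skip; skip; skip; skip]
  · exact absurd rfl hk
  · -- k = 0, i = 1 : u = (1, √3), φ3 < 0
    rw [show Real.sqrt 3 * (2 * (1/2:ℝ) - 0) = Real.sqrt 3 * 1 by norm_num] at hm
    nlinarith
  · -- k = 0, i = 2 : u = (0, √3), φ2 < 0
    rw [show Real.sqrt 3 * (2 * (1/2:ℝ) - 1) = 0 by norm_num] at hm
    nlinarith
  · -- k = 1, i = 0 : u = (-1/2, -√3/2), φ1 < 0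
    nlinarith
  · exact absurd rfl hk
  · -- k = 1, i = 2 : u = (-1, 0), φ2 < 0
    rw [show Real.sqrt 3 * (2 * (0:ℝ) - 1) = -(Real.sqrt 3 * 1) by ring] at hm
    nlinarith
  · -- k = 2, i = 0 : u = (3/2, -√3/2), φ1 < 0
    nlinarith
  · -- k = 2, i = 1 : u = (2, 0), φ3 < 0
    rw [show Real.sqrt 3 * (2 * (1:ℝ) - 0) = Real.sqrt 3 * 2 by norm_num] at hm
    nlinarith
  · exact absurd rfl hk

end SGfacts2

section SGfacts3

variable {SG : Set (ℝ × ℝ)} (hne : SG.Nonempty) (hcpt : IsCompact SG)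
  (hself : SG = F 0 '' SG ∪ F 1 '' SG ∪ F 2 '' SG)

include hne hcpt hself in
lemma cells_ne_int :
    ∀ (w v : List (Fin 3)), w.length = v.length → w ≠ v →
      ∀ p, p ∈ Fw w '' SG → p ∈ Fw v '' SG → p ∈ Vstar := by
  intro w
  induction w with
  | nil =>
    intro v hl hne' p _ _
    exact absurd (List.length_eq_zero_iff.mp hl.symm).symm hne'
  | cons i w ih =>
    intro v hl hnev p hpw hpv
    cases v with
    | nil => simp at hl
    | cons j v =>
      rcases hpw with ⟨a, ha, rfl⟩
      rcases hpv with ⟨b, hb, he⟩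
      -- Fw (j :: v) b = Fw (i :: w) a, i.e. F j (Fw v b) = F i (Fw w a)
      by_cases hij : i = j
      · subst hij
        have hab : Fw v b = Fw w a := F_injective i he
        have h1 : Fw w a ∈ Fw w '' SG := ⟨a, ha, rfl⟩
        have h2 : Fw w a ∈ Fw v '' SG := hab ▸ ⟨b, hb, rfl⟩
        have hwv : w ≠ v := fun h => hnev (by rw [h])
        have hl' : w.length = v.length := by simpa using hl
        exact F_mem_Vstar i (ih v hl' hwv _ h1 h2)
      · have hpi : Fw (i :: w) a ∈ F i '' SG := ⟨Fw w a, cell_sub_SG hself w ⟨a, ha, rfl⟩, rfl⟩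
        have hpj : Fw (i :: w) a ∈ F j '' SG := by
          refine ⟨Fw v b, cell_sub_SG hself v ⟨b, hb, rfl⟩, ?_⟩
          exact he
        have := cell_pair hne hcpt hself hij hpi hpj
        rw [this]
        exact F_mem_Vstar i (q_mem_Vstar j)

include hne hcpt hself in
lemma cell_unique {p : ℝ × ℝ} (hpv : p ∉ Vstar) {w v : List (Fin 3)}
    (hl : w.length = v.length) (hw : p ∈ Fw w '' SG) (hv : p ∈ Fw v '' SG) : w = v := by
  by_contra h
  exact hpv (cells_ne_int hne hcpt hself w v hl h p hw hv)

include hne hcpt hself in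
lemma F_pullback_Vstar {i : Fin 3} {z : ℝ × ℝ} (hz : z ∈ SG) (h : F i z ∈ Vstar) : z ∈ Vstar := by
  have key : ∀ k, q k = F i z → z ∈ Vstar := by
    intro k hk
    have hki : k = i := by
      by_contra hki
      exact q_not_in_cell hne hcpt hself hki ⟨z, hz, hk.symm⟩
    subst hki
    have : F k z = F k (q k) := by rw [F_q_self]; exact hk.symm
    rw [F_injective k this]
    exact q_mem_Vstar k
  rcases mem_iUnion.mp h with ⟨w, y, hy, he⟩
  have hySG : y ∈ SG := by
    rcases hy with rfl | rfl | rfl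
    exacts [q_mem_SG hne hcpt hself 0, q_mem_SG hne hcpt hself 1, q_mem_SG hne hcpt hself 2]
  have hyV : y ∈ Vstar := by
    rcases hy with rfl | rfl | rfl
    exacts [q_mem_Vstar 0, q_mem_Vstar 1, q_mem_Vstar 2]
  cases w with
  | nil =>
    rcases hy with rfl | rfl | rfl
    exacts [key 0 he, key 1 he, key 2 he]
  | cons j w =>
    by_cases hij : j = i
    · subst hij
      have : Fw w y = z := F_injective j he
      rw [← this]
      exact Fw_mem_Vstar w hyV
    · have hji : i ≠ j := fun h' => hij h'.symm
      have h1 : F i z ∈ F i '' SG := ⟨z, hz, rfl⟩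
      have h2 : F i z ∈ F j '' SG := ⟨Fw w y, cell_sub_SG hself w ⟨y, hySG, rfl⟩, he⟩
      have := cell_pair hne hcpt hself hji h1 h2
      have hz' : z = q j := F_injective i this
      rw [hz']
      exact q_mem_Vstar j

include hne hcpt hself in
lemma Fw_pullback_Vstar (w : List (Fin 3)) {z : ℝ × ℝ} (hz : z ∈ SG)
    (h : Fw w z ∈ Vstar) : z ∈ Vstar := by
  induction w with
  | nil => exact h
  | cons i w ih =>
    have h1 : Fw w z ∈ SG := cell_sub_SG hself w ⟨z, hz, rfl⟩
    exact ih (F_pullback_Vstar hne hcpt hself h1 h)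

include hne hcpt hself in
lemma cells_const :
    ∀ (n : ℕ) (P : List (Fin 3) → Prop),
      (∀ w v, w.length = n → v.length = n → (Fw w '' SG ∩ Fw v '' SG).Nonempty → P w → P v) →
      ∀ w v, w.length = n → v.length = n → P w → P v := by
  intro n
  induction n with
  | zero =>
    intro P _ w v hw hv hPw
    rw [List.length_eq_zero_iff.mp hw] at hPw
    rw [List.length_eq_zero_iff.mp hv]
    exact hPw
  | succ n ih =>
    intro P hP w v hw hv hPw
    cases w with
    | nil => simp at hw
    | cons i w' =>
    cases v with
    | nil => simp at hv
    | cons j v' =>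
    have hw' : w'.length = n := by simpa using hw
    have hv' : v'.length = n := by simpa using hv
    -- within a copy
    have copy : ∀ (c : Fin 3) (a b : List (Fin 3)), a.length = n → b.length = n →
        P (c :: a) → P (c :: b) := by
      intro c
      apply ih (fun l => P (c :: l))
      intro a b ha hb ⟨z, hz1, hz2⟩ hPa
      refine hP (c :: a) (c :: b) (by simp [ha]) (by simp [hb]) ⟨F c z, ?_, ?_⟩ hPa
      · rcases hz1 with ⟨t, ht, rfl⟩; exact ⟨t, ht, rfl⟩
      · rcases hz2 with ⟨t, ht, rfl⟩; exact ⟨t, ht, rfl⟩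
    by_cases hij : i = j
    · subst hij
      exact copy i w' v' hw' hv' hPw
    · -- cross copies via corner cells
      have h1 : P (i :: List.replicate n j) := copy i w' _ hw' (by simp) hPw
      have hcross : P (j :: List.replicate n i) := by
        refine hP (i :: List.replicate n j) (j :: List.replicate n i)
          (by simp) (by simp) ⟨F i (q j), ?_, ?_⟩ h1
        · refine ⟨q j, q_mem_SG hne hcpt hself j, ?_⟩
          show F i (Fw (List.replicate n j) (q j)) = F i (q j)
          rw [Fw_replicate]
        · rw [F_q_comm]
          refine ⟨q i, q_mem_SG hne hcpt hself i, ?_⟩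
          show F j (Fw (List.replicate n i) (q i)) = F j (q i)
          rw [Fw_replicate]
      exact copy j _ v' (by simp) hv' hcross

include hne hcpt hself in
theorem SG_preconn : IsPreconnected SG := by
  intro U V hU hV hcover ⟨a, haS, haU⟩ ⟨b, hbS, hbV⟩
  by_contra hem
  rw [Set.not_nonempty_iff_eq_empty] at hem
  -- SG ∩ U and SG ∩ V are disjoint compact sets
  have hAeq : SG ∩ U = SG \ V := by
    ext x
    constructor
    · rintro ⟨hx, hxu⟩
      refine ⟨hx, fun hxv => ?_⟩
      have : x ∈ SG ∩ (U ∩ V) := ⟨hx, hxu, hxv⟩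
      rw [hem] at this
      exact this
    · rintro ⟨hx, hxv⟩
      rcases hcover hx with h | h
      exacts [⟨hx, h⟩, absurd h hxv]
  have hBeq : SG ∩ V = SG \ U := by
    ext x
    constructor
    · rintro ⟨hx, hxv⟩
      refine ⟨hx, fun hxu => ?_⟩
      have : x ∈ SG ∩ (U ∩ V) := ⟨hx, hxu, hxv⟩
      rw [hem] at this
      exact this
    · rintro ⟨hx, hxu⟩
      rcases hcover hx with h | h
      exacts [absurd h hxu, ⟨hx, h⟩]
  have hBclosed : IsClosed (SG ∩ V) := by rw [hBeq]; exact (hcpt.diff hU).isClosed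
  have hBne : (SG ∩ V).Nonempty := ⟨b, hbS, hbV⟩
  -- minimal distance from SG ∩ U to SG ∩ V
  have hAcpt : IsCompact (SG ∩ U) := by rw [hAeq]; exact hcpt.diff hV
  obtain ⟨a0, ha0, hmin⟩ := hAcpt.exists_isMinOn ⟨a, haS, haU⟩
    (Metric.continuous_infDist_pt (SG ∩ V)).continuousOn
  have ha0nB : a0 ∉ SG ∩ V := by
    rintro ⟨_, ha0V⟩
    have : a0 ∈ SG ∩ (U ∩ V) := ⟨ha0.1, ha0.2, ha0V⟩
    rw [hem] at this
    exact this
  have hδpos : 0 < Metric.infDist a0 (SG ∩ V) :=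
    (hBclosed.notMem_iff_infDist_pos hBne).mp ha0nB
  set δ := Metric.infDist a0 (SG ∩ V) with hδ
  have hkey : ∀ x ∈ SG ∩ U, ∀ y ∈ SG ∩ V, δ ≤ dist x y := by
    intro x hx y hy
    calc δ ≤ Metric.infDist x (SG ∩ V) := hmin hx
      _ ≤ dist x y := Metric.infDist_le_dist_of_mem hy
  obtain ⟨n, hn⟩ := exists_small_cell (SG := SG) hδpos
  -- each cell is contained in U or in V
  have dichot : ∀ w : List (Fin 3), w.length = n → Fw w '' SG ⊆ U ∨ Fw w '' SG ⊆ V := by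
    intro w hw
    by_cases h1 : Fw w '' SG ⊆ U
    · exact Or.inl h1
    · right
      rw [Set.not_subset] at h1
      obtain ⟨y, hy, hyU⟩ := h1
      have hyV : y ∈ SG ∩ V := by
        have := cell_sub_SG hself w hy
        rcases hcover this with h | h
        exacts [absurd h hyU, ⟨this, h⟩]
      intro x hx
      by_contra hxV
      have hxU : x ∈ SG ∩ U := by
        have := cell_sub_SG hself w hx
        rcases hcover this with h | h
        exacts [⟨this, h⟩, absurd h hxV]
      have := hkey x hxU y hyV
      have hd : dist x y ≤ Metric.diam SG / 2 ^ n := by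
        have := dist_le_in_cell hcpt hx hy
        rwa [hw] at this
      linarith
  -- transfer
  obtain ⟨wa, hwa, hmema⟩ := exists_cell hself haS n
  obtain ⟨wb, hwb, hmemb⟩ := exists_cell hself hbS n
  have hPa : Fw wa '' SG ⊆ U := by
    rcases dichot wa hwa with h | h
    · exact h
    · exfalso
      have : a ∈ SG ∩ (U ∩ V) := ⟨haS, haU, h hmema⟩
      rw [hem] at this
      exact this
  have hPb : Fw wb '' SG ⊆ U := by
    refine cells_const hne hcpt hself n (fun w => w.length = n → Fw w '' SG ⊆ U)
      ?_ wa wb hwa hwb (fun _ => hPa) hwb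
    intro w v hw hv ⟨z, hz1, hz2⟩ hPw _
    have hzU : z ∈ U := hPw hw hz1
    rcases dichot v hv with h | h
    · exact h
    · exfalso
      have : z ∈ SG ∩ (U ∩ V) := ⟨cell_sub_SG hself v hz2, hzU, h hz2⟩
      rw [hem] at this
      exact this
  have : b ∈ SG ∩ (U ∩ V) := ⟨hbS, hPb hmemb, hbV⟩
  rw [hem] at this
  exact this

end SGfacts3

lemma other_two (c : Fin 3) :
    ∃ a b : Fin 3, a ≠ c ∧ b ≠ c ∧ a ≠ b ∧ ∀ d : Fin 3, d = c ∨ d = a ∨ d = b := by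
  fin_cases c
  · exact ⟨1, 2, by decide, by decide, by decide, by decide⟩
  · exact ⟨0, 2, by decide, by decide, by decide, by decide⟩
  · exact ⟨0, 1, by decide, by decide, by decide, by decide⟩

section SGfacts4

variable {SG : Set (ℝ × ℝ)} (hne : SG.Nonempty) (hcpt : IsCompact SG)
  (hself : SG = F 0 '' SG ∪ F 1 '' SG ∪ F 2 '' SG)

include hne hcpt hself in
lemma two_cells_preconn (a b : Fin 3) : IsPreconnected (F a '' SG ∪ F b '' SG) := by
  have hpre := SG_preconn hne hcpt hself
  refine IsPreconnected.union' ⟨F a (q b), ⟨q b, q_mem_SG hne hcpt hself b, rfl⟩, ?_⟩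
    (hpre.image _ (F_continuous a).continuousOn) (hpre.image _ (F_continuous b).continuousOn)
  rw [F_q_comm]
  exact ⟨q a, q_mem_SG hne hcpt hself a, rfl⟩

include hne hcpt hself in
lemma Bset_preconn : ∀ w : List (Fin 3),
    IsPreconnected (⋃ v ∈ {v : List (Fin 3) | v.length = w.length ∧ v ≠ w}, Fw v '' SG) := by
  intro w
  induction w with
  | nil =>
    convert isPreconnected_empty
    ext x
    simp only [Set.mem_iUnion, Set.mem_setOf_eq, Set.mem_empty_iff_false, iff_false]
    rintro ⟨v, ⟨⟨hl, hv⟩, -⟩⟩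
    exact hv (List.length_eq_zero_iff.mp hl)
  | cons c w' ih =>
    obtain ⟨a, b, hac, hbc, hab, htri⟩ := other_two c
    set B' := ⋃ v ∈ {v : List (Fin 3) | v.length = w'.length ∧ v ≠ w'}, Fw v '' SG with hB'
    have claim : (⋃ v ∈ {v : List (Fin 3) | v.length = (c :: w').length ∧ v ≠ c :: w'},
        Fw v '' SG) = (F c '' B') ∪ (F a '' SG ∪ F b '' SG) := by
      ext x
      constructor
      · intro hx
        rcases Set.mem_iUnion₂.mp hx with ⟨v, ⟨hlen, hnev⟩, hxv⟩
        cases v with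
        | nil => simp at hlen
        | cons d v' =>
          rcases hxv with ⟨t, ht, rfl⟩
          rcases htri d with rfl | rfl | rfl
          · left
            have hne' : v' ≠ w' := fun h => hnev (by rw [h])
            have hlen' : v'.length = w'.length := by simpa using hlen
            exact ⟨Fw v' t, Set.mem_iUnion₂.mpr ⟨v', ⟨hlen', hne'⟩, ⟨t, ht, rfl⟩⟩, rfl⟩
          · exact Or.inr (Or.inl ⟨Fw v' t, cell_sub_SG hself v' ⟨t, ht, rfl⟩, rfl⟩)
          · exact Or.inr (Or.inr ⟨Fw v' t, cell_sub_SG hself v' ⟨t, ht, rfl⟩, rfl⟩)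
      · rintro (⟨y, hyB, rfl⟩ | (⟨z, hz, rfl⟩ | ⟨z, hz, rfl⟩))
        · rcases Set.mem_iUnion₂.mp hyB with ⟨v', ⟨hl, hne'⟩, ⟨t, ht, rfl⟩⟩
          refine Set.mem_iUnion₂.mpr ⟨c :: v', ⟨by simpa using hl, ?_⟩, ⟨t, ht, rfl⟩⟩
          intro h
          exact hne' (by injection h)
        · obtain ⟨u, hu, hzu⟩ := exists_cell hself hz w'.length
          rcases hzu with ⟨t, ht, rfl⟩
          refine Set.mem_iUnion₂.mpr ⟨a :: u, ⟨by simpa using hu, ?_⟩, ⟨t, ht, rfl⟩⟩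
          intro h
          exact hac (by injection h)
        · obtain ⟨u, hu, hzu⟩ := exists_cell hself hz w'.length
          rcases hzu with ⟨t, ht, rfl⟩
          refine Set.mem_iUnion₂.mpr ⟨b :: u, ⟨by simpa using hu, ?_⟩, ⟨t, ht, rfl⟩⟩
          intro h
          exact hbc (by injection h)
    rw [claim]
    rcases Set.eq_empty_or_nonempty B' with hBe | hBne
    · rw [hBe]
      simpa using two_cells_preconn hne hcpt hself a b
    · -- pick t ∈ {a, b} with replicate n t ≠ w'
      have hkey : List.replicate w'.length a ≠ w' ∨ List.replicate w'.length b ≠ w' := by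
        by_contra hcon
        push_neg at hcon
        obtain ⟨h1, h2⟩ := hcon
        obtain ⟨x, hx⟩ := hBne
        rcases Set.mem_iUnion₂.mp hx with ⟨v, ⟨hl, hnev⟩, -⟩
        cases w' with
        | nil => exact hnev (List.length_eq_zero_iff.mp hl)
        | cons e w'' =>
          apply hab
          have h1' : List.replicate (w''.length + 1) a = e :: w'' := by simpa using h1
          have h2' : List.replicate (w''.length + 1) b = e :: w'' := by simpa using h2
          rw [List.replicate_succ] at h1' h2'
          have ha' : a = e := by injection h1'
          have hb' : b = e := by injection h2'
          rw [ha', hb']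
      obtain ⟨t, htne, hta⟩ : ∃ t : Fin 3, List.replicate w'.length t ≠ w' ∧ (t = a ∨ t = b) := by
        rcases hkey with h | h
        exacts [⟨a, h, Or.inl rfl⟩, ⟨b, h, Or.inr rfl⟩]
      have hqt : q t ∈ B' := by
        refine Set.mem_iUnion₂.mpr ⟨List.replicate w'.length t, ⟨by simp, htne⟩,
          ⟨q t, q_mem_SG hne hcpt hself t, Fw_replicate w'.length t⟩⟩
      refine IsPreconnected.union' ⟨F c (q t), ⟨q t, hqt, rfl⟩, ?_⟩
        (ih.image _ (F_continuous c).continuousOn) (two_cells_preconn hne hcpt hself a b)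
      rw [F_q_comm]
      rcases hta with rfl | rfl
      · exact Or.inl ⟨q c, q_mem_SG hne hcpt hself c, rfl⟩
      · exact Or.inr ⟨q c, q_mem_SG hne hcpt hself c, rfl⟩

include hne hcpt hself in
lemma SG_diff_pt_preconn {p : ℝ × ℝ} (hp : p ∈ SG) (hpv : p ∉ Vstar) :
    IsPreconnected (SG \ {p}) := by
  have hw : ∀ n, ∃ w : List (Fin 3), w.length = n ∧ p ∈ Fw w '' SG :=
    fun n => exists_cell hself hp n
  choose w hlen hmem using hw
  have huq : ∀ n (v : List (Fin 3)), v.length = n → p ∈ Fw v '' SG → v = w n := by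
    intro n v hv hm
    exact cell_unique hne hcpt hself hpv (by rw [hv, hlen n]) hm (hmem n)
  obtain ⟨i, hi⟩ := List.length_eq_one_iff.mp (hlen 1)
  have hhead : ∀ n, 1 ≤ n → (w n).take 1 = [i] := by
    intro n hn
    have hsplit : w n = (w n).take 1 ++ (w n).drop 1 := (List.take_append_drop 1 (w n)).symm
    have hpmem : p ∈ Fw ((w n).take 1) '' SG := by
      rcases hmem n with ⟨t, ht, hteq⟩
      refine ⟨Fw ((w n).drop 1) t, cell_sub_SG hself _ ⟨t, ht, rfl⟩, ?_⟩
      rw [← Fw_append, ← hsplit, hteq]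
    have hl1 : ((w n).take 1).length = 1 := by
      rw [List.length_take, hlen n]
      omega
    rw [huq 1 _ hl1 hpmem, hi]
  set t : Fin 3 := if i = 0 then 1 else 0 with htdef
  have hti : t ≠ i := by
    rw [htdef]
    by_cases h : i = 0
    · rw [if_pos h, h]; decide
    · rw [if_neg h]; exact fun h' => h h'.symm
  have hqt : ∀ n : ℕ, q t ∈
      ⋃ v ∈ {v : List (Fin 3) | v.length = (w (n+1)).length ∧ v ≠ w (n+1)}, Fw v '' SG := by
    intro n
    refine Set.mem_iUnion₂.mpr ⟨List.replicate (n+1) t, ⟨by simp [hlen], ?_⟩,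
      ⟨q t, q_mem_SG hne hcpt hself t, Fw_replicate (n+1) t⟩⟩
    intro h
    apply hti
    have h1 : (List.replicate (n+1) t).take 1 = [t] := by
      rw [List.replicate_succ]
      simp
    have h2 := hhead (n+1) (by omega)
    rw [h] at h1
    rw [h1] at h2
    injection h2
  have hcover : SG \ {p} = ⋃ n : ℕ,
      ⋃ v ∈ {v : List (Fin 3) | v.length = (w (n+1)).length ∧ v ≠ w (n+1)}, Fw v '' SG := by
    ext x
    constructor
    · rintro ⟨hxS, hxp⟩
      have hd : 0 < dist x p := dist_pos.mpr hxp
      obtain ⟨m, hm⟩ := exists_small_cell (SG := SG) hd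
      obtain ⟨v, hvl, hvm⟩ := exists_cell hself hxS (m + 1)
      have hvne : v ≠ w (m+1) := by
        intro h
        have : dist x p ≤ Metric.diam SG / 2 ^ (m+1) := by
          have := dist_le_in_cell hcpt hvm (h ▸ hmem (m+1))
          rwa [hvl] at this
        have h2 : Metric.diam SG / 2 ^ (m+1) ≤ Metric.diam SG / 2 ^ m := by
          gcongr <;> first | exact Metric.diam_nonneg | norm_num | omega
        linarith
      exact Set.mem_iUnion.mpr ⟨m, Set.mem_iUnion₂.mpr ⟨v, ⟨by rw [hvl, hlen], hvne⟩, hvm⟩⟩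
    · intro hx
      rcases Set.mem_iUnion.mp hx with ⟨n, hx⟩
      rcases Set.mem_iUnion₂.mp hx with ⟨v, ⟨hvl, hvne⟩, hxv⟩
      refine ⟨cell_sub_SG hself v hxv, ?_⟩
      intro h
      rw [Set.mem_singleton_iff] at h
      subst h
      exact hvne (huq (n+1) v (by rw [hvl, hlen]) hxv)
  rw [hcover, ← Set.sUnion_range]
  apply isPreconnected_sUnion (q t)
  · rintro s ⟨n, rfl⟩
    exact hqt n
  · rintro s ⟨n, rfl⟩
    exact Bset_preconn hne hcpt hself (w (n+1))

include hne hcpt hself in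
lemma cell_nbhd {y : ℝ × ℝ} (hy : y ∈ SG) (n : ℕ) :
    ∃ r > 0, ∀ x ∈ SG, dist x y < r →
      ∃ v : List (Fin 3), v.length = n ∧ y ∈ Fw v '' SG ∧ x ∈ Fw v '' SG := by
  classical
  set N := ⋃ v ∈ {v : List (Fin 3) | v.length = n ∧ y ∉ Fw v '' SG}, Fw v '' SG with hN
  have hNclosed : IsClosed N := by
    apply Set.Finite.isClosed_biUnion
    · exact (List.finite_length_eq (Fin 3) n).subset fun v hv => hv.1
    · exact fun v _ => (hcpt.image (Fw_continuous v)).isClosed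
  have hyN : y ∉ N := by
    intro h
    rcases Set.mem_iUnion₂.mp h with ⟨v, ⟨-, hv⟩, hyv⟩
    exact hv hyv
  have key : ∀ r, (∀ z ∈ N, r ≤ dist z y) → ∀ x ∈ SG, dist x y < r →
      ∃ v : List (Fin 3), v.length = n ∧ y ∈ Fw v '' SG ∧ x ∈ Fw v '' SG := by
    intro r hr x hx hxr
    obtain ⟨v, hvl, hxv⟩ := exists_cell hself hx n
    refine ⟨v, hvl, ?_, hxv⟩
    by_contra hyv
    have hxN : x ∈ N := Set.mem_iUnion₂.mpr ⟨v, ⟨hvl, hyv⟩, hxv⟩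
    exact absurd hxr (not_lt.mpr (hr x hxN))
  rcases Set.eq_empty_or_nonempty N with hNe | hNne
  · exact ⟨1, one_pos, key 1 (by rw [hNe]; simp)⟩
  · refine ⟨Metric.infDist y N, (hNclosed.notMem_iff_infDist_pos hNne).mp hyN, ?_⟩
    apply key
    intro z hz
    rw [dist_comm]
    exact Metric.infDist_le_dist_of_mem hz

end SGfacts4

section SGfacts5

variable {SG : Set (ℝ × ℝ)} (hne : SG.Nonempty) (hcpt : IsCompact SG)
  (hself : SG = F 0 '' SG ∪ F 1 '' SG ∪ F 2 '' SG)

include hne hcpt hself in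
lemma open_diff_pt (O : Set (ℝ × ℝ)) (hO : IsOpen O) (hU : IsPreconnected (SG ∩ O))
    {p : ℝ × ℝ} (hpS : p ∈ SG) (hpO : p ∈ O) (hpv : p ∉ Vstar) :
    IsPreconnected ((SG ∩ O) \ {p}) := by
  -- find a small cell C containing p inside O
  obtain ⟨ε, hε, hball⟩ := Metric.isOpen_iff.mp hO p hpO
  obtain ⟨n, hn⟩ := exists_small_cell (SG := SG) hε
  obtain ⟨wp, hwl, hwm⟩ := exists_cell hself hpS n
  set C := Fw wp '' SG with hC
  have hCO : C ⊆ O := by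
    intro x hx
    apply hball
    rw [Metric.mem_ball]
    have := dist_le_in_cell hcpt hx hwm
    rw [hwl] at this
    linarith
  have hCSG : C ⊆ SG := cell_sub_SG hself wp
  -- C is a relative neighborhood of p
  obtain ⟨r, hr, hrC⟩ := cell_nbhd hne hcpt hself hpS n
  have hnbhd : ∀ x ∈ SG, dist x p < r → x ∈ C := by
    intro x hx hxr
    obtain ⟨v, hvl, hpmem, hxmem⟩ := hrC x hx hxr
    have hvw : v = wp := cell_unique hne hcpt hself hpv (by rw [hvl, hwl]) hpmem hwm
    rw [hC, ← hvw]
    exact hxmem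
  -- C minus p is preconnected
  obtain ⟨z, hzS, hzp⟩ := hwm
  have hzv : z ∉ Vstar := fun h => hpv (by rw [← hzp]; exact Fw_mem_Vstar wp h)
  have hCm : IsPreconnected (C \ {p}) := by
    have himg : C \ {p} = Fw wp '' (SG \ {z}) := by
      rw [hC, ← hzp, Set.image_diff (Fw_injective wp), Set.image_singleton]
    rw [himg]
    exact (SG_diff_pt_preconn hne hcpt hself hzS hzv).image _ (Fw_continuous wp).continuousOn
  have hq12 : q 1 ≠ q 2 := by
    simp only [q]
    intro h
    rw [Prod.ext_iff] at h
    norm_num at h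
  have hCmne : (C \ {p}).Nonempty := by
    have h1 : Fw wp (q 1) ∈ C := ⟨q 1, q_mem_SG hne hcpt hself 1, rfl⟩
    have h2 : Fw wp (q 2) ∈ C := ⟨q 2, q_mem_SG hne hcpt hself 2, rfl⟩
    by_cases h : Fw wp (q 1) = p
    · refine ⟨Fw wp (q 2), h2, ?_⟩
      simp only [Set.mem_singleton_iff]
      intro h'
      exact hq12 (Fw_injective wp (by rw [h, h']))
    · exact ⟨Fw wp (q 1), h1, h⟩
  -- main separation argument
  intro O1 O2 h1 h2 hsub hne1 hne2
  by_contra hdisj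
  rw [Set.not_nonempty_iff_eq_empty] at hdisj
  have hCsub : C \ {p} ⊆ (SG ∩ O) \ {p} := fun x hx => ⟨⟨hCSG hx.1, hCO hx.1⟩, hx.2⟩
  have hCside : C \ {p} ⊆ O1 ∨ C \ {p} ⊆ O2 := by
    by_cases hc1 : C \ {p} ⊆ O1
    · exact Or.inl hc1
    · right
      rw [Set.not_subset] at hc1
      obtain ⟨y, hy, hy1⟩ := hc1
      have hy2 : y ∈ O2 := by
        rcases hsub (hCsub hy) with h | h
        exacts [absurd h hy1, h]
      intro x hx
      by_contra hx2
      have hx1 : x ∈ O1 := by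
        rcases hsub (hCsub hx) with h | h
        exacts [h, absurd h hx2]
      have := hCm O1 O2 h1 h2 (fun u hu => hsub (hCsub hu)) ⟨x, hx, hx1⟩ ⟨y, hy, hy2⟩
      obtain ⟨u, hu, hu12⟩ := this
      have : u ∈ ((SG ∩ O) \ {p}) ∩ (O1 ∩ O2) := ⟨hCsub hu, hu12⟩
      rw [hdisj] at this
      exact this
  have key : ∀ P1 P2 : Set (ℝ × ℝ), IsOpen P1 → IsOpen P2 →
      ((SG ∩ O) \ {p} ⊆ P1 ∪ P2) → (((SG ∩ O) \ {p}) ∩ (P1 ∩ P2) = ∅) →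
      (((SG ∩ O) \ {p}) ∩ P2).Nonempty → C \ {p} ⊆ P1 → False := by
    intro P1 P2 hP1 hP2 hPsub hPdisj hPne2 hCP1
    obtain ⟨x2, hx2S, hx2P⟩ := hPne2
    have := hU (P1 ∪ Metric.ball p r) (P2 ∩ {p}ᶜ)
      (hP1.union Metric.isOpen_ball) (hP2.inter isClosed_singleton.isOpen_compl)
      ?_ ⟨p, ⟨hpS, hpO⟩, Or.inr (Metric.mem_ball_self hr)⟩
      ⟨x2, ⟨hx2S.1.1, hx2S.1.2⟩, hx2P, hx2S.2⟩
    · obtain ⟨u, huSO, hu1, hu2, hup⟩ := this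
      have huS : u ∈ (SG ∩ O) \ {p} := ⟨huSO, hup⟩
      have hu1' : u ∈ P1 := by
        rcases hu1 with h | h
        · exact h
        · have : u ∈ C := hnbhd u huSO.1 (Metric.mem_ball.mp h)
          exact hCP1 ⟨this, hup⟩
      have : u ∈ ((SG ∩ O) \ {p}) ∩ (P1 ∩ P2) := ⟨huS, hu1', hu2⟩
      rw [hPdisj] at this
      exact this
    · intro x hx
      by_cases hxp : x = p
      · exact Or.inl (Or.inr (by rw [hxp]; exact Metric.mem_ball_self hr))
      · rcases hPsub ⟨hx, hxp⟩ with h | h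
        · exact Or.inl (Or.inl h)
        · exact Or.inr ⟨h, hxp⟩
  rcases hCside with hC1 | hC2
  · exact key O1 O2 h1 h2 hsub hdisj hne2 hC1
  · refine key O2 O1 h2 h1 (fun x hx => (hsub hx).symm) ?_ hne1 hC2
    rw [← hdisj]
    ext u
    constructor
    · rintro ⟨hu, h2', h1'⟩; exact ⟨hu, h1', h2'⟩
    · rintro ⟨hu, h1', h2'⟩; exact ⟨hu, h2', h1'⟩

include hne hcpt hself in
lemma open_diff_finite :
    ∀ (P : Set (ℝ × ℝ)), P.Finite → ∀ O : Set (ℝ × ℝ), IsOpen O →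
      IsPreconnected (SG ∩ O) → P ⊆ SG ∩ O → (∀ x ∈ P, x ∉ Vstar) →
      IsPreconnected ((SG ∩ O) \ P) := by
  intro P hPfin
  refine Set.Finite.induction_on P hPfin ?_ ?_
  · intro O hO hU _ _
    simpa using hU
  · intro a P haP hPfin ih O hO hU hsub hV
    have hPO : IsOpen (O \ P) := hO.sdiff hPfin.isClosed
    have hIH : IsPreconnected (SG ∩ (O \ P)) := by
      have : SG ∩ (O \ P) = (SG ∩ O) \ P := by
        ext x; constructor
        · rintro ⟨h1, h2, h3⟩; exact ⟨⟨h1, h2⟩, h3⟩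
        · rintro ⟨⟨h1, h2⟩, h3⟩; exact ⟨h1, h2, h3⟩
      rw [this]
      exact ih O hO hU (fun x hx => hsub (Set.mem_insert_of_mem a hx))
        (fun x hx => hV x (Set.mem_insert_of_mem a hx))
    have ha : a ∈ SG ∩ (O \ P) :=
      ⟨(hsub (Set.mem_insert a P)).1, (hsub (Set.mem_insert a P)).2, haP⟩
    have := open_diff_pt hne hcpt hself (O \ P) hPO hIH ha.1 ha.2
      (hV a (Set.mem_insert a P))
    have heq : (SG ∩ (O \ P)) \ {a} = (SG ∩ O) \ insert a P := by
      ext x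
      simp only [Set.mem_diff, Set.mem_inter_iff, Set.mem_singleton_iff, Set.mem_insert_iff]
      tauto
    rwa [heq] at this

end SGfacts5

/-- Let `SG` be the Sierpinski gasket and `f : SG → ℝ` continuous with finite zero
set `Z`; set `Z₀ = Z ∩ V*`. Then on each connected component `D` of `SG \ Z₀`
(in the subspace topology of `SG`) either `f ≥ 0` on `D` or `f ≤ 0` on `D`. -/
theorem statement2 (SG : Set (ℝ × ℝ)) (hne : SG.Nonempty) (hcpt : IsCompact SG)
    (hself : SG = F 0 '' SG ∪ F 1 '' SG ∪ F 2 '' SG)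
    (f : SG → ℝ) (hf : Continuous f)
    (hfin : {x : SG | f x = 0}.Finite)
    (Z₀ : Set SG) (hZ₀ : Z₀ = {x : SG | f x = 0 ∧ (x : ℝ × ℝ) ∈ Vstar}) :
    ∀ x ∈ Z₀ᶜ,
      (∀ y ∈ connectedComponentIn Z₀ᶜ x, 0 ≤ f y) ∨
      (∀ y ∈ connectedComponentIn Z₀ᶜ x, f y ≤ 0) := by
  intro x hx
  by_contra hcon
  push_neg at hcon
  obtain ⟨⟨a, haD, hfa⟩, ⟨b, hbD, hfb⟩⟩ := hcon
  have hfb' : 0 < f b := hfb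
  set D := connectedComponentIn Z₀ᶜ x with hD
  have hDpre : IsPreconnected D := isPreconnected_connectedComponentIn
  have hDsub : D ⊆ Z₀ᶜ := connectedComponentIn_subset _ _
  -- ambient sets
  set Z' : Set (ℝ × ℝ) := Subtype.val '' {y : SG | f y = 0} with hZ'
  set Z₀' : Set (ℝ × ℝ) := Subtype.val '' Z₀ with hZ₀'
  have hZ'fin : Z'.Finite := hfin.image _
  have hZ₀'fin : Z₀'.Finite := by
    apply Set.Finite.image
    apply hfin.subset
    rw [hZ₀]
    exact fun t ht => ht.1
  have hnotv : ∀ z ∈ Z', z ∉ Z₀' → z ∉ Vstar := by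
    rintro z ⟨t, ht, rfl⟩ hz hv
    exact hz ⟨t, by rw [hZ₀]; exact ⟨ht, hv⟩, rfl⟩
  -- the image of D
  have hD'pre : IsPreconnected (Subtype.val '' D) :=
    hDpre.image _ continuous_subtype_val.continuousOn
  have hD'sub : ∀ z ∈ Subtype.val '' D, z ∈ SG ∧ z ∉ Z₀' := by
    rintro z ⟨t, ht, rfl⟩
    refine ⟨t.2, ?_⟩
    rintro ⟨u, hu, he⟩
    have : u = t := Subtype.coe_injective he
    exact hDsub ht (this ▸ hu)
  have haD' : (a : ℝ × ℝ) ∈ Subtype.val '' D := ⟨a, haD, rfl⟩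
  have hbD' : (b : ℝ × ℝ) ∈ Subtype.val '' D := ⟨b, hbD, rfl⟩
  -- the maximal preconnected piece through a
  set Col : Set (Set (ℝ × ℝ)) :=
    {S | IsPreconnected S ∧ (∀ z ∈ S, z ∈ SG ∧ z ∉ Z₀') ∧ (a : ℝ × ℝ) ∈ S} with hCol
  set CC : Set (ℝ × ℝ) := ⋃₀ Col with hCC
  have haZ : (a : ℝ × ℝ) ∉ Z₀' := by
    rintro ⟨u, hu, he⟩
    have : u = a := Subtype.coe_injective he
    subst this
    rw [hZ₀] at hu
    exact absurd hu.1 (ne_of_lt hfa)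
  have hsingle : {(a : ℝ × ℝ)} ∈ Col := by
    refine ⟨isPreconnected_singleton, ?_, rfl⟩
    intro z hz
    rw [Set.mem_singleton_iff] at hz
    subst hz
    exact ⟨a.2, haZ⟩
  have haCC : (a : ℝ × ℝ) ∈ CC := ⟨{(a : ℝ × ℝ)}, hsingle, rfl⟩
  have hCCpre : IsPreconnected CC :=
    isPreconnected_sUnion (a : ℝ × ℝ) Col (fun S hS => hS.2.2) (fun S hS => hS.1)
  have hCCsub : ∀ z ∈ CC, z ∈ SG ∧ z ∉ Z₀' := by
    rintro z ⟨S, hS, hz⟩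
    exact hS.2.1 z hz
  have hD'CC : Subtype.val '' D ⊆ CC :=
    Set.subset_sUnion_of_mem ⟨hD'pre, hD'sub, haD'⟩
  -- relative openness of CC
  have hopen : ∀ y ∈ CC, ∃ r > 0, ∀ z ∈ SG, dist z y < r → z ∈ CC := by
    intro y hy
    obtain ⟨hySG, hyZ⟩ := hCCsub y hy
    obtain ⟨ρ, hρ, hρZ⟩ : ∃ ρ > 0, ∀ z ∈ Z₀', ρ ≤ dist z y := by
      rcases Set.eq_empty_or_nonempty Z₀' with hE | hNe
      · exact ⟨1, one_pos, by rw [hE]; simp⟩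
      · refine ⟨Metric.infDist y Z₀', (hZ₀'fin.isClosed.notMem_iff_infDist_pos hNe).mp hyZ, ?_⟩
        intro z hz
        rw [dist_comm]
        exact Metric.infDist_le_dist_of_mem hz
    obtain ⟨n, hn⟩ := exists_small_cell (SG := SG) hρ
    obtain ⟨r, hr, hrC⟩ := cell_nbhd hne hcpt hself hySG n
    refine ⟨r, hr, ?_⟩
    intro z hzSG hzr
    obtain ⟨v, hvl, hyv, hzv⟩ := hrC z hzSG hzr
    have hcell : ∀ u ∈ Fw v '' SG, u ∈ SG ∧ u ∉ Z₀' := by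
      intro u hu
      refine ⟨cell_sub_SG hself v hu, fun huZ => ?_⟩
      have h1 := hρZ u huZ
      have h2 : dist u y ≤ Metric.diam SG / 2 ^ n := by
        have := dist_le_in_cell hcpt hu hyv
        rwa [hvl] at this
      linarith
    have hSmem : (CC ∪ Fw v '' SG) ∈ Col := by
      refine ⟨IsPreconnected.union' ⟨y, hy, hyv⟩ hCCpre
        ((SG_preconn hne hcpt hself).image _ (Fw_continuous v).continuousOn), ?_, Or.inl haCC⟩
      rintro u (hu | hu)
      exacts [hCCsub u hu, hcell u hu]
    exact Set.subset_sUnion_of_mem hSmem (Or.inr hzv)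
  -- ambient open set carving out CC
  set OC : Set (ℝ × ℝ) :=
    ⋃₀ {B : Set (ℝ × ℝ) | ∃ y ∈ CC, ∃ r > 0, B = Metric.ball y r ∧
      ∀ z ∈ SG, dist z y < r → z ∈ CC} with hOC
  have hOCopen : IsOpen OC := by
    apply isOpen_sUnion
    rintro B ⟨y, -, r, -, rfl, -⟩
    exact Metric.isOpen_ball
  have hOCeq : SG ∩ OC = CC := by
    ext z
    constructor
    · rintro ⟨hzSG, B, ⟨y, hy, r, hr, rfl, hB⟩, hzB⟩
      exact hB z hzSG (Metric.mem_ball.mp hzB)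
    · intro hz
      obtain ⟨r, hr, hB⟩ := hopen z hz
      exact ⟨(hCCsub z hz).1, Metric.ball z r, ⟨z, hz, r, hr, rfl, hB⟩, Metric.mem_ball_self hr⟩
  -- remove the zeros lying in CC
  have hPfin : (Z' ∩ CC).Finite := hZ'fin.inter_of_left _
  have hPsub : Z' ∩ CC ⊆ SG ∩ OC := by
    rw [hOCeq]
    exact fun z hz => hz.2
  have hPV : ∀ z ∈ Z' ∩ CC, z ∉ Vstar :=
    fun z hz => hnotv z hz.1 (hCCsub z hz.2).2
  have hpre := open_diff_finite hne hcpt hself (Z' ∩ CC) hPfin OC hOCopen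
    (by rw [hOCeq]; exact hCCpre) hPsub hPV
  rw [hOCeq] at hpre
  have hCCZ : CC \ (Z' ∩ CC) = CC \ Z' := by
    ext z
    simp only [Set.mem_diff, Set.mem_inter_iff]
    tauto
  rw [hCCZ] at hpre
  -- pull back to the subtype
  have hsub2 : CC \ Z' ⊆ SG := fun z hz => (hCCsub z hz.1).1
  have hTimg : Subtype.val '' (Subtype.val ⁻¹' (CC \ Z') : Set SG) = CC \ Z' := by
    rw [Subtype.image_preimage_coe]
    exact Set.inter_eq_self_of_subset_right hsub2
  have hTpre : IsPreconnected (Subtype.val ⁻¹' (CC \ Z') : Set SG) := by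
    rw [← Topology.IsInducing.subtypeVal.isPreconnected_image, hTimg]
    exact hpre
  have haT : a ∈ (Subtype.val ⁻¹' (CC \ Z') : Set SG) := by
    refine ⟨hD'CC haD', ?_⟩
    rintro ⟨t, ht, he⟩
    have : t = a := Subtype.coe_injective he
    subst this
    exact absurd ht (ne_of_lt hfa)
  have hbT : b ∈ (Subtype.val ⁻¹' (CC \ Z') : Set SG) := by
    refine ⟨hD'CC hbD', ?_⟩
    rintro ⟨t, ht, he⟩
    have : t = b := Subtype.coe_injective he
    subst this
    exact absurd ht (ne_of_gt hfb')
  have hIcc := hTpre.intermediate_value haT hbT hf.continuousOn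
  have h0 : (0 : ℝ) ∈ Set.Icc (f a) (f b) := ⟨le_of_lt hfa, le_of_lt hfb'⟩
  obtain ⟨t, htT, hft⟩ := hIcc h0
  exact htT.2 ⟨t, hft, rfl⟩
end

section
/- (Three-term recurrence.) For every n ≥ 1 one has f_{n+1} = s_{n+1} + a_n·s_n + b̃_n·s_{n−1}, where a_n = ⟨f_{n+1}, s_n⟩_S/‖s_n‖_S² and b̃_n = ⟨f_{n+1}, s_{n−1}⟩_S/‖s_{n−1}‖_S²; moreover f₁ = s₁ + (⟨f₁, s₀⟩_S/‖s₀‖_S²)·s₀. -/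
open Filter RealInnerProductSpace

variable {H : Type*} [NormedAddCommGroup H] [InnerProductSpace ℝ H]

/-- `Wlt P n` is the span of `P 0, …, P (n-1)`; thus `Wlt P 0 = ⊥ = W_{-1}` and
`Wlt P (n+1)` is the space `W_n = span{P_0, …, P_n}`. -/
def Wlt (P : ℕ → H) (n : ℕ) : Submodule ℝ H := Submodule.span ℝ (P '' Set.Iio n)

/-- `Wtot P` is the space `W = ⋃ₙ Wₙ` of all polynomials. -/
def Wtot (P : ℕ → H) : Submodule ℝ H := Submodule.span ℝ (Set.range P)

/-- The Sobolev inner product `⟨f, g⟩_S = ⟨f, g⟩₂ + χ⟨Δf, Δg⟩₂`. -/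
noncomputable def innerS (Δ : H →ₗ[ℝ] H) (χ : ℝ) (f g : H) : ℝ :=
  ⟪ f, g ⟫ + χ * ⟪ Δ f, Δ g ⟫

/-- The Sobolev norm `‖f‖_S = √(‖f‖₂² + χ‖Δf‖₂²)`. -/
noncomputable def normS (Δ : H →ₗ[ℝ] H) (χ : ℝ) (f : H) : ℝ :=
  Real.sqrt (‖f‖ ^ 2 + χ * ‖Δ f‖ ^ 2)

lemma Wlt_mono (P : ℕ → H) {m n : ℕ} (h : m ≤ n) : Wlt P m ≤ Wlt P n :=
  Submodule.span_mono (Set.image_mono (fun _ hx => lt_of_lt_of_le hx h))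

lemma P_mem_Wlt (P : ℕ → H) {j m : ℕ} (h : j < m) : P j ∈ Wlt P m :=
  Submodule.subset_span ⟨j, h, rfl⟩

lemma Wlt_le_Wtot (P : ℕ → H) (m : ℕ) : Wlt P m ≤ Wtot P :=
  Submodule.span_mono (Set.image_subset_range _ _)

lemma innerS_symm (Δ : H →ₗ[ℝ] H) (χ : ℝ) (f g : H) :
    innerS Δ χ f g = innerS Δ χ g f := by
  simp [innerS, real_inner_comm]

lemma innerS_self (Δ : H →ₗ[ℝ] H) (χ : ℝ) (f : H) :
    innerS Δ χ f f = ‖f‖ ^ 2 + χ * ‖Δ f‖ ^ 2 := by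
  simp [innerS, real_inner_self_eq_norm_sq]

lemma innerS_sub_left (Δ : H →ₗ[ℝ] H) (χ : ℝ) (f g h : H) :
    innerS Δ χ (f - g) h = innerS Δ χ f h - innerS Δ χ g h := by
  simp [innerS, inner_sub_left]; ring

lemma innerS_add_left (Δ : H →ₗ[ℝ] H) (χ : ℝ) (f g h : H) :
    innerS Δ χ (f + g) h = innerS Δ χ f h + innerS Δ χ g h := by
  simp [innerS, inner_add_left]; ring

lemma innerS_smul_left (Δ : H →ₗ[ℝ] H) (χ : ℝ) (c : ℝ) (f g : H) :
    innerS Δ χ (c • f) g = c * innerS Δ χ f g := by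
  simp [innerS, real_inner_smul_left]; ring

lemma innerS_add_right (Δ : H →ₗ[ℝ] H) (χ : ℝ) (f g h : H) :
    innerS Δ χ f (g + h) = innerS Δ χ f g + innerS Δ χ f h := by
  simp [innerS, inner_add_right]; ring

lemma innerS_smul_right (Δ : H →ₗ[ℝ] H) (χ : ℝ) (c : ℝ) (f g : H) :
    innerS Δ χ f (c • g) = c * innerS Δ χ f g := by
  simp [innerS, real_inner_smul_right]; ring

lemma innerS_zero_right (Δ : H →ₗ[ℝ] H) (χ : ℝ) (f : H) :
    innerS Δ χ f 0 = 0 := by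
  simp [innerS]

lemma eq_zero_of_innerS_self_eq_zero (Δ : H →ₗ[ℝ] H) {χ : ℝ} (hχ : 0 < χ) {r : H}
    (hr : innerS Δ χ r r = 0) : r = 0 := by
  rw [innerS_self] at hr
  have h1 : 0 ≤ χ * ‖Δ r‖ ^ 2 := mul_nonneg hχ.le (sq_nonneg _)
  have h2 : ‖r‖ ^ 2 = 0 := by nlinarith [sq_nonneg ‖r‖]
  have : ‖r‖ = 0 := by nlinarith [norm_nonneg r]
  exact norm_eq_zero.mp this

/-- Three-term recurrence: for `n ≥ 1`, `f_{n+1} = s_{n+1} + a_n s_n + b̃_n s_{n−1}` with the stated coefficients, and `f₁ = s₁ + (⟨f₁, s₀⟩_S/‖s₀‖_S²) s₀`. -/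
theorem statement5
    (P : ℕ → H) (hP : LinearIndependent ℝ P)
    (Δ G : H →ₗ[ℝ] H)
    (hΔ0 : Δ (P 0) = 0) (hΔsucc : ∀ n, Δ (P (n + 1)) = P n)
    (hGsym : ∀ u ∈ Wtot P, ∀ v ∈ Wtot P, ⟪ G u, v ⟫ = ⟪ u, G v ⟫)
    (hGinv : ∀ u ∈ Wtot P, Δ (G u) = u)
    (hGmap : ∀ n, ∀ u ∈ Wlt P (n + 1), G u ∈ Wlt P (n + 2))
    (χ : ℝ) (hχ : 0 < χ)
    (p : ℕ → H)
    (hpmonic : ∀ n, p n - P n ∈ Wlt P n)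
    (hportho : ∀ n, ∀ w ∈ Wlt P n, ⟪ p n, w ⟫ = 0)
    (s : ℕ → H)
    (hsmonic : ∀ n, s n - P n ∈ Wlt P n)
    (hsortho : ∀ n, ∀ w ∈ Wlt P n, innerS Δ χ (s n) w = 0)
    : (∀ n, 1 ≤ n →
      G (p n) = s (n + 1)
        + (innerS Δ χ (G (p n)) (s n) / (‖s n‖ ^ 2 + χ * ‖Δ (s n)‖ ^ 2)) • s n
        + (innerS Δ χ (G (p n)) (s (n - 1)) /
            (‖s (n - 1)‖ ^ 2 + χ * ‖Δ (s (n - 1))‖ ^ 2)) • s (n - 1)) ∧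
      G (p 0) = s 1
        + (innerS Δ χ (G (p 0)) (s 0) / (‖s 0‖ ^ 2 + χ * ‖Δ (s 0)‖ ^ 2)) • s 0 := by
  -- Δ maps W_{m} into W_{m-1}
  have hΔmap : ∀ m : ℕ, ∀ u ∈ Wlt P (m + 1), Δ u ∈ Wlt P m := by
    intro m u hu
    have h1 : Δ u ∈ Submodule.map Δ (Wlt P (m + 1)) := Submodule.mem_map_of_mem hu
    rw [Wlt, Submodule.map_span] at h1
    refine Submodule.span_le.mpr ?_ h1
    rintro x ⟨y, ⟨j, hj, rfl⟩, rfl⟩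
    have hj' : j < m + 1 := hj
    cases j with
    | zero => simp [hΔ0]
    | succ k =>
      rw [hΔsucc k]
      exact P_mem_Wlt P (by omega)
  have hsmem : ∀ m, s m ∈ Wlt P (m + 1) := by
    intro m
    have h1 : s m = (s m - P m) + P m := by abel
    rw [h1]
    exact add_mem (Wlt_mono P (Nat.le_succ m) (hsmonic m)) (P_mem_Wlt P (Nat.lt_succ_self m))
  have hpmem : ∀ m, p m ∈ Wlt P (m + 1) := by
    intro m
    have h1 : p m = (p m - P m) + P m := by abel
    rw [h1]
    exact add_mem (Wlt_mono P (Nat.le_succ m) (hpmonic m)) (P_mem_Wlt P (Nat.lt_succ_self m))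
  have hΔs : ∀ m, Δ (s m) ∈ Wlt P m := fun m => hΔmap m _ (hsmem m)
  -- decomposition of W_{m+1}
  have hsup : ∀ m : ℕ, Wlt P (m + 1) = Wlt P m ⊔ Submodule.span ℝ {P m} := by
    intro m
    have h1 : Set.Iio (m + 1) = insert m (Set.Iio m) := by
      ext x
      simp only [Set.mem_Iio, Set.mem_insert_iff]
      omega
    rw [Wlt, h1, Set.image_insert_eq, Submodule.span_insert]
    exact sup_comm _ _
  -- monicity of f = G (p n)
  have hfmonic : ∀ n, G (p n) - P (n + 1) ∈ Wlt P (n + 1) := by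
    intro n
    have hf : G (p n) ∈ Wlt P (n + 2) := hGmap n _ (hpmem n)
    rw [hsup (n + 1)] at hf
    obtain ⟨y, hy, z, hz, hyz⟩ := Submodule.mem_sup.mp hf
    obtain ⟨c, rfl⟩ := Submodule.mem_span_singleton.mp hz
    have hΔf : Δ (G (p n)) = p n := hGinv _ (Wlt_le_Wtot P (n + 1) (hpmem n))
    have hΔy : Δ y ∈ Wlt P n := hΔmap n y hy
    have hc : (c - 1) • P n = (p n - P n) - Δ y := by
      have h2 : p n = Δ y + c • P n := by
        rw [← hΔf, ← hyz, map_add, map_smul, hΔsucc n]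
      rw [sub_smul, one_smul]
      rw [h2]; abel
    have hc1 : c = 1 := by
      by_contra hne
      have hmem : (c - 1) • P n ∈ Wlt P n := by
        rw [hc]; exact sub_mem (hpmonic n) hΔy
      have : P n ∈ Wlt P n := by
        have h3 : P n = (c - 1)⁻¹ • ((c - 1) • P n) := by
          rw [smul_smul, inv_mul_cancel₀ (sub_ne_zero.mpr hne), one_smul]
        rw [h3]; exact Submodule.smul_mem _ _ hmem
      exact hP.notMem_span_image (s := Set.Iio n) (by simp) this
    have : G (p n) - P (n + 1) = y := by
      rw [← hyz, hc1, one_smul]; abel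
    rw [this]; exact hy
  -- key orthogonality
  have hkey : ∀ n j : ℕ, j + 2 ≤ n → innerS Δ χ (G (p n)) (s j) = 0 := by
    intro n j hj
    have hpn : p n ∈ Wtot P := Wlt_le_Wtot P (n + 1) (hpmem n)
    have hsj : s j ∈ Wtot P := Wlt_le_Wtot P (j + 1) (hsmem j)
    have h1 : ⟪G (p n), s j⟫ = ⟪p n, G (s j)⟫ := hGsym _ hpn _ hsj
    have h2 : Δ (G (p n)) = p n := hGinv _ hpn
    have h3 : G (s j) ∈ Wlt P n := Wlt_mono P hj (hGmap j _ (hsmem j))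
    have h4 : Δ (s j) ∈ Wlt P n := Wlt_mono P (by omega) (hΔs j)
    rw [innerS, h1, h2, hportho n _ h3, hportho n _ h4]
    ring
  -- s m ≠ 0 and the denominator is positive
  have hsne : ∀ m, s m ≠ 0 := by
    intro m h
    have h1 : P m ∈ Wlt P m := by
      have h2 := hsmonic m
      rw [h] at h2
      have h3 : P m = -(0 - P m) := by abel
      rw [h3]; exact neg_mem h2
    exact hP.notMem_span_image (s := Set.Iio m) (by simp) h1
  have hdpos : ∀ m, 0 < ‖s m‖ ^ 2 + χ * ‖Δ (s m)‖ ^ 2 := by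
    intro m
    have h1 : 0 < ‖s m‖ ^ 2 := pow_pos (norm_pos_iff.mpr (hsne m)) 2
    nlinarith [mul_nonneg hχ.le (sq_nonneg ‖Δ (s m)‖)]
  -- the s's span Wlt
  have hPspan : ∀ j : ℕ, ∀ m, j < m → P j ∈ Submodule.span ℝ (s '' Set.Iio m) := by
    intro j
    induction j using Nat.strong_induction_on with
    | _ j ih =>
      intro m hm
      have hs : s j ∈ Submodule.span ℝ (s '' Set.Iio m) := Submodule.subset_span ⟨j, hm, rfl⟩
      have hle : Wlt P j ≤ Submodule.span ℝ (s '' Set.Iio m) := by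
        rw [Wlt, Submodule.span_le]
        rintro x ⟨i, hi, rfl⟩
        exact ih i hi m (hi.trans hm)
      have h1 : P j = s j - (s j - P j) := by abel
      rw [h1]
      exact sub_mem hs (hle (hsmonic j))
  have hspan : ∀ m, Wlt P m ≤ Submodule.span ℝ (s '' Set.Iio m) := by
    intro m
    rw [Wlt, Submodule.span_le]
    rintro x ⟨j, hj, rfl⟩
    exact hPspan j m hj
  -- vanishing criterion
  have hzero : ∀ (r : H) (m : ℕ), r ∈ Wlt P m →
      (∀ j < m, innerS Δ χ r (s j) = 0) → r = 0 := by
    intro r m hr hj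
    have horth : ∀ w ∈ Submodule.span ℝ (s '' Set.Iio m), innerS Δ χ r w = 0 := by
      intro w hw
      induction hw using Submodule.span_induction with
      | mem x hx =>
        obtain ⟨j, hjm, rfl⟩ := hx
        exact hj j hjm
      | zero => exact innerS_zero_right Δ χ r
      | add x y hx hy ihx ihy => rw [innerS_add_right, ihx, ihy]; ring
      | smul c x hx ihx => rw [innerS_smul_right, ihx]; ring
    exact eq_zero_of_innerS_self_eq_zero Δ hχ (horth r (hspan m hr))
  constructor
  · -- case n ≥ 1
    intro n hn
    obtain ⟨m, rfl⟩ : ∃ m, n = m + 1 := ⟨n - 1, by omega⟩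
    simp only [Nat.add_sub_cancel]
    set f := G (p (m + 1)) with hf
    set a := innerS Δ χ f (s (m + 1)) / (‖s (m + 1)‖ ^ 2 + χ * ‖Δ (s (m + 1))‖ ^ 2) with ha
    set b := innerS Δ χ f (s m) / (‖s m‖ ^ 2 + χ * ‖Δ (s m)‖ ^ 2) with hb
    set r := f - (s (m + 2) + a • s (m + 1) + b • s m) with hr
    have hrmem : r ∈ Wlt P (m + 2) := by
      have h1 : r = ((f - P (m + 2)) - (s (m + 2) - P (m + 2))) - a • s (m + 1) - b • s m := by
        rw [hr]; abel
      rw [h1]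
      exact sub_mem (sub_mem (sub_mem (hfmonic (m + 1)) (hsmonic (m + 2)))
        (Submodule.smul_mem _ _ (hsmem (m + 1))))
        (Submodule.smul_mem _ _ (Wlt_mono P (by omega) (hsmem m)))
    have hrzero : r = 0 := by
      refine hzero r (m + 2) hrmem ?_
      intro j hj
      have hsucc : innerS Δ χ (s (m + 2)) (s j) = 0 :=
        hsortho (m + 2) _ (Wlt_mono P (by omega) (hsmem j))
      have hexp : innerS Δ χ r (s j) = innerS Δ χ f (s j)
          - innerS Δ χ (s (m + 2)) (s j) - a * innerS Δ χ (s (m + 1)) (s j)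
          - b * innerS Δ χ (s m) (s j) := by
        rw [hr, innerS_sub_left, innerS_add_left, innerS_add_left,
          innerS_smul_left, innerS_smul_left]
        ring
      rcases Nat.lt_or_ge j m with hj' | hge
      · -- j < m
        have h1 : innerS Δ χ f (s j) = 0 := hkey (m + 1) j (by omega)
        have h2 : innerS Δ χ (s (m + 1)) (s j) = 0 :=
          hsortho (m + 1) _ (Wlt_mono P (by omega) (hsmem j))
        have h3 : innerS Δ χ (s m) (s j) = 0 :=
          hsortho m _ (Wlt_mono P (by omega) (hsmem j))
        rw [hexp, h1, h2, h3, hsucc]; ring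
      rcases Nat.lt_or_ge j (m + 1) with hj' | hge'
      · -- j = m
        have hje : j = m := by omega
        subst hje
        have h2 : innerS Δ χ (s (j + 1)) (s j) = 0 := hsortho (j + 1) _ (hsmem j)
        have h3 : innerS Δ χ (s j) (s j) = ‖s j‖ ^ 2 + χ * ‖Δ (s j)‖ ^ 2 :=
          innerS_self Δ χ (s j)
        have hd := (hdpos j).ne'
        rw [hexp, h2, h3, hsucc, hb]
        field_simp
        ring
      · -- j = m + 1
        have hje : j = m + 1 := by omega
        subst hje
        have h2 : innerS Δ χ (s (m + 1)) (s (m + 1)) =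
            ‖s (m + 1)‖ ^ 2 + χ * ‖Δ (s (m + 1))‖ ^ 2 := innerS_self Δ χ (s (m + 1))
        have h3 : innerS Δ χ (s m) (s (m + 1)) = 0 := by
          rw [innerS_symm]; exact hsortho (m + 1) _ (hsmem m)
        have hd := (hdpos (m + 1)).ne'
        rw [hexp, h2, h3, hsucc, ha]
        field_simp
        ring
    exact sub_eq_zero.mp hrzero
  · -- case n = 0
    set f := G (p 0) with hf
    set a := innerS Δ χ f (s 0) / (‖s 0‖ ^ 2 + χ * ‖Δ (s 0)‖ ^ 2) with ha
    set r := f - (s 1 + a • s 0) with hr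
    have hrmem : r ∈ Wlt P 1 := by
      have h1 : r = ((f - P 1) - (s 1 - P 1)) - a • s 0 := by rw [hr]; abel
      rw [h1]
      exact sub_mem (sub_mem (hfmonic 0) (hsmonic 1)) (Submodule.smul_mem _ _ (hsmem 0))
    have hrzero : r = 0 := by
      refine hzero r 1 hrmem ?_
      intro j hj
      interval_cases j
      have hsucc : innerS Δ χ (s 1) (s 0) = 0 := hsortho 1 _ (hsmem 0)
      have hexp : innerS Δ χ r (s 0) = innerS Δ χ f (s 0)
          - innerS Δ χ (s 1) (s 0) - a * innerS Δ χ (s 0) (s 0) := by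
        rw [hr, innerS_sub_left, innerS_add_left, innerS_smul_left]; ring
      have hd := (hdpos 0).ne'
      rw [hexp, hsucc, innerS_self, ha]
      field_simp
      ring
    have := sub_eq_zero.mp hrzero
    rw [this]
end
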